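/- Let I = ⟨x_{i_1}^{a_1},...,x_{i_r}^{a_r}⟩ be generated by pure powers of distinct variables with 2 ≤ a_1 ≤ ... ≤ a_r, and let f be a monomial with (\overline{I} : f) = ⟨x_{i_1},...,x_{i_r}⟩ and deg f = v(\overline{I}). Then there exists a minimal monomial generator g of \overline{I} such that f = g / x_{i_r}. -/

import Mathlib

open MvPolynomial Ideal

/-- The integral closure of an ideal. -/
noncomputable def intClosure {R : Type*} [CommRing R] (I : Ideal R) : Ideal R :=
  Ideal.span {x : R | ∃ n : ℕ, 0 < n ∧ ∃ c : ℕ → R,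
    (∀ i ∈ Finset.Icc 1 n, c i ∈ I ^ i) ∧
    x ^ n + ∑ i ∈ Finset.Icc 1 n, c i * x ^ (n - i) = 0}

/-- The v-number of a homogeneous ideal `J`. -/
noncomputable def vnumber {K : Type*} [Field K] {σ : Type*}
    (J : Ideal (MvPolynomial σ K)) : ℕ :=
  sInf {d : ℕ | ∃ f : MvPolynomial σ K, f.IsHomogeneous d ∧
    Submodule.colon J (Ideal.span {f}) ∈
      associatedPrimes (MvPolynomial σ K) (MvPolynomial σ K ⧸ J)}

section Weights

variable {σ : Type*} {k : ℕ}

/-- total product of exponents -/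
def wA (a : Fin (k + 1) → ℕ) : ℕ := ∏ p, a p

/-- integer weight of a monomial exponent -/
def wz (i : Fin (k + 1) → σ) (a : Fin (k + 1) → ℕ) (b : σ →₀ ℕ) : ℕ :=
  ∑ p, b (i p) * (wA a / a p)

variable {i : Fin (k + 1) → σ} {a : Fin (k + 1) → ℕ}

lemma a_pos (ha2 : 2 ≤ a 0) (hmono : Monotone a) (p : Fin (k + 1)) : 0 < a p :=
  lt_of_lt_of_le (by omega) (le_trans ha2 (hmono (Fin.zero_le p)))

lemma a_dvd_wA (p : Fin (k + 1)) : a p ∣ wA a :=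
  Finset.dvd_prod_of_mem a (Finset.mem_univ p)

lemma wA_pos (ha2 : 2 ≤ a 0) (hmono : Monotone a) : 0 < wA a :=
  Finset.prod_pos fun p _ => a_pos ha2 hmono p

lemma wz_add (b d : σ →₀ ℕ) : wz i a (b + d) = wz i a b + wz i a d := by
  unfold wz
  rw [← Finset.sum_add_distrib]
  exact Finset.sum_congr rfl fun p _ => by rw [Finsupp.add_apply, add_mul]

lemma wz_single (hi : Function.Injective i) (p : Fin (k + 1)) (n : ℕ) :
    wz i a (Finsupp.single (i p) n) = n * (wA a / a p) := by
  classical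
  unfold wz
  rw [Finset.sum_eq_single p]
  · rw [Finsupp.single_apply, if_pos rfl]
  · intro q _ hq
    rw [Finsupp.single_apply, if_neg fun h => hq (hi h.symm), zero_mul]
  · intro h; exact absurd (Finset.mem_univ p) h

lemma wz_congr {b d : σ →₀ ℕ} (h : ∀ p, b (i p) = d (i p)) : wz i a b = wz i a d :=
  Finset.sum_congr rfl fun p _ => by rw [h p]

end Weights

section Jdeg

variable {K : Type*} [Field K] {σ : Type*} {k : ℕ}

/-- The ideal of polynomials all of whose monomials have weight at least `t`. -/
def Jdeg (i : Fin (k + 1) → σ) (a : Fin (k + 1) → ℕ) (t : ℕ) : Ideal (MvPolynomial σ K) where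
  carrier := {f | ∀ b ∈ f.support, t ≤ wz i a b}
  zero_mem' := by simp
  add_mem' := by
    classical
    intro f g hf hg b hb
    rcases Finset.mem_union.1 (Finsupp.support_add hb) with h | h
    · exact hf b h
    · exact hg b h
  smul_mem' := by
    classical
    intro g f hf b hb
    rw [smul_eq_mul] at hb
    rcases Finset.mem_add.1 (MvPolynomial.support_mul g f hb) with ⟨x, _, y, hy, rfl⟩
    calc t ≤ wz i a y := hf y hy
    _ ≤ wz i a x + wz i a y := Nat.le_add_left _ _
    _ = wz i a (x + y) := (wz_add x y).symm

variable {i : Fin (k + 1) → σ} {a : Fin (k + 1) → ℕ}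

lemma mem_Jdeg {t : ℕ} {f : MvPolynomial σ K} :
    f ∈ Jdeg i a t ↔ ∀ b ∈ f.support, t ≤ wz i a b := Iff.rfl

lemma Jdeg_mul_le {s t : ℕ} :
    (Jdeg i a s : Ideal (MvPolynomial σ K)) * Jdeg i a t ≤ Jdeg i a (s + t) := by
  classical
  rw [Ideal.mul_le]
  intro f hf g hg b hb
  rcases Finset.mem_add.1 (MvPolynomial.support_mul f g hb) with ⟨x, hx, y, hy, rfl⟩
  rw [wz_add]
  exact add_le_add (hf x hx) (hg y hy)

lemma Jdeg_pow_le {J : Ideal (MvPolynomial σ K)} {t : ℕ} (h : J ≤ Jdeg i a t) (n : ℕ) :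
    J ^ n ≤ Jdeg i a (n * t) := by
  induction n with
  | zero => intro f _; exact fun b _ => by simp
  | succ n ih =>
      rw [pow_succ]
      calc J ^ n * J ≤ Jdeg i a (n * t) * Jdeg i a t := Ideal.mul_mono ih h
      _ ≤ Jdeg i a (n * t + t) := Jdeg_mul_le
      _ = Jdeg i a ((n + 1) * t) := by ring_nf

end Jdeg

section Vmin

variable {K : Type*} [Field K] {σ : Type*} {k : ℕ}
variable {i : Fin (k + 1) → σ} {a : Fin (k + 1) → ℕ}

/-- minimal weight of a monomial in the support -/
noncomputable def vmin (i : Fin (k + 1) → σ) (a : Fin (k + 1) → ℕ)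
    (f : MvPolynomial σ K) : ℕ :=
  sInf (wz i a '' f.support)

lemma vmin_le {f : MvPolynomial σ K} {b : σ →₀ ℕ} (hb : b ∈ f.support) :
    vmin i a f ≤ wz i a b :=
  Nat.sInf_le ⟨b, hb, rfl⟩

lemma exists_wz_eq_vmin {f : MvPolynomial σ K} (hf : f ≠ 0) :
    ∃ b ∈ f.support, wz i a b = vmin i a f := by
  have hne : (wz i a '' (f.support : Set (σ →₀ ℕ))).Nonempty := by
    obtain ⟨b, hb⟩ := MvPolynomial.support_nonempty.2 hf
    exact ⟨wz i a b, b, hb, rfl⟩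
  obtain ⟨b, hb, h⟩ := Nat.sInf_mem hne
  exact ⟨b, hb, h⟩

lemma mem_Jdeg_vmin {f : MvPolynomial σ K} : f ∈ Jdeg i a (vmin i a f) :=
  fun _ hb => vmin_le hb

lemma coeff_filter_sum_of_mem {f : MvPolynomial σ K} {pr : (σ →₀ ℕ) → Prop} [DecidablePred pr]
    {b : σ →₀ ℕ} (hmem : b ∈ f.support.filter pr) :
    coeff b (∑ d ∈ f.support.filter pr, monomial d (coeff d f)) = coeff b f := by
  classical
  rw [MvPolynomial.coeff_sum]
  simp_rw [coeff_monomial]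
  rw [Finset.sum_ite_eq', if_pos hmem]

lemma coeff_filter_sum_of_not_mem {f : MvPolynomial σ K} {pr : (σ →₀ ℕ) → Prop} [DecidablePred pr]
    {b : σ →₀ ℕ} (hmem : b ∉ f.support.filter pr) :
    coeff b (∑ d ∈ f.support.filter pr, monomial d (coeff d f)) = 0 := by
  classical
  rw [MvPolynomial.coeff_sum]
  simp_rw [coeff_monomial]
  rw [Finset.sum_ite_eq', if_neg hmem]

lemma vmin_mul {f g : MvPolynomial σ K} (hf : f ≠ 0) (hg : g ≠ 0) :
    vmin i a (f * g) = vmin i a f + vmin i a g := by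
  classical
  set vf := vmin i a f with hvf
  set vg := vmin i a g with hvg
  set f1 := ∑ b ∈ f.support.filter (fun b => wz i a b = vf), monomial b (coeff b f) with hf1
  set f2 := ∑ b ∈ f.support.filter (fun b => ¬ wz i a b = vf), monomial b (coeff b f) with hf2
  set g1 := ∑ b ∈ g.support.filter (fun b => wz i a b = vg), monomial b (coeff b g) with hg1
  set g2 := ∑ b ∈ g.support.filter (fun b => ¬ wz i a b = vg), monomial b (coeff b g) with hg2
  have hfsplit : f = f1 + f2 := by
    rw [hf1, hf2, Finset.sum_filter_add_sum_filter_not, support_sum_monomial_coeff]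
  have hgsplit : g = g1 + g2 := by
    rw [hg1, hg2, Finset.sum_filter_add_sum_filter_not, support_sum_monomial_coeff]
  have sf1 : ∀ b ∈ f1.support, wz i a b = vf := by
    intro b hb
    have := MvPolynomial.mem_support_iff.1 hb
    by_contra hcon
    exact this (coeff_filter_sum_of_not_mem (fun hmem => hcon (Finset.mem_filter.1 hmem).2))
  have sg1 : ∀ b ∈ g1.support, wz i a b = vg := by
    intro b hb
    have := MvPolynomial.mem_support_iff.1 hb
    by_contra hcon
    exact this (coeff_filter_sum_of_not_mem (fun hmem => hcon (Finset.mem_filter.1 hmem).2))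
  have sf2 : ∀ b ∈ f2.support, vf + 1 ≤ wz i a b := by
    intro b hb
    have := MvPolynomial.mem_support_iff.1 hb
    by_cases hmem : b ∈ f.support.filter (fun b => ¬ wz i a b = vf)
    · obtain ⟨hbs, hne⟩ := Finset.mem_filter.1 hmem
      exact Nat.succ_le_of_lt (lt_of_le_of_ne (vmin_le hbs) (Ne.symm hne))
    · exact absurd (coeff_filter_sum_of_not_mem hmem) this
  have sg2 : ∀ b ∈ g2.support, vg + 1 ≤ wz i a b := by
    intro b hb
    have := MvPolynomial.mem_support_iff.1 hb
    by_cases hmem : b ∈ g.support.filter (fun b => ¬ wz i a b = vg)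
    · obtain ⟨hbs, hne⟩ := Finset.mem_filter.1 hmem
      exact Nat.succ_le_of_lt (lt_of_le_of_ne (vmin_le hbs) (Ne.symm hne))
    · exact absurd (coeff_filter_sum_of_not_mem hmem) this
  have f1ne : f1 ≠ 0 := by
    obtain ⟨b0, hb0, hb0w⟩ := exists_wz_eq_vmin (i := i) (a := a) hf
    refine MvPolynomial.ne_zero_iff.2 ⟨b0, ?_⟩
    rw [hf1, coeff_filter_sum_of_mem (Finset.mem_filter.2 ⟨hb0, hb0w⟩)]
    exact MvPolynomial.mem_support_iff.1 hb0
  have g1ne : g1 ≠ 0 := by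
    obtain ⟨b0, hb0, hb0w⟩ := exists_wz_eq_vmin (i := i) (a := a) hg
    refine MvPolynomial.ne_zero_iff.2 ⟨b0, ?_⟩
    rw [hg1, coeff_filter_sum_of_mem (Finset.mem_filter.2 ⟨hb0, hb0w⟩)]
    exact MvPolynomial.mem_support_iff.1 hb0
  -- membership in Jdeg ideals
  have hf1J : f1 ∈ Jdeg i a vf := fun b hb => le_of_eq (sf1 b hb).symm
  have hg1J : g1 ∈ Jdeg i a vg := fun b hb => le_of_eq (sg1 b hb).symm
  have hf2J : f2 ∈ Jdeg i a (vf + 1) := fun b hb => sf2 b hb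
  have hg2J : g2 ∈ Jdeg i a (vg + 1) := fun b hb => sg2 b hb
  set rest := f1 * g2 + (f2 * g1 + f2 * g2) with hrest
  have hrestJ : rest ∈ Jdeg i a (vf + vg + 1) := by
    refine Ideal.add_mem _ ?_ (Ideal.add_mem _ ?_ ?_)
    · have := Jdeg_mul_le (Ideal.mul_mem_mul hf1J hg2J)
      intro b hb; have h := this b hb; omega
    · have := Jdeg_mul_le (Ideal.mul_mem_mul hf2J hg1J)
      intro b hb; have h := this b hb; omega
    · have := Jdeg_mul_le (Ideal.mul_mem_mul hf2J hg2J)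
      intro b hb; have h := this b hb; omega
  have hsplit : f * g = f1 * g1 + rest := by rw [hfsplit, hgsplit]; ring
  have h11ne : f1 * g1 ≠ 0 := mul_ne_zero f1ne g1ne
  obtain ⟨b, hb⟩ := MvPolynomial.support_nonempty.2 h11ne
  have hwzb : wz i a b = vf + vg := by
    rcases Finset.mem_add.1 (MvPolynomial.support_mul f1 g1 hb) with ⟨x, hx, y, hy, rfl⟩
    rw [wz_add, sf1 x hx, sg1 y hy]
  have hbfg : b ∈ (f * g).support := by
    rw [MvPolynomial.mem_support_iff, hsplit, coeff_add]
    have hzero : coeff b rest = 0 := by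
      by_contra hc
      have := hrestJ b (MvPolynomial.mem_support_iff.2 hc)
      omega
    rw [hzero, add_zero]
    exact MvPolynomial.mem_support_iff.1 hb
  refine le_antisymm ?_ ?_
  · have := vmin_le (i := i) (a := a) hbfg
    rw [hwzb] at this
    exact this
  · obtain ⟨b', hb', hb'w⟩ := exists_wz_eq_vmin (i := i) (a := a) (mul_ne_zero hf hg)
    have := Jdeg_mul_le (Ideal.mul_mem_mul (mem_Jdeg_vmin (i := i) (a := a) (f := f))
      (mem_Jdeg_vmin (i := i) (a := a) (f := g))) b' hb'
    rw [hb'w] at this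
    exact this

lemma wz_zero : wz i a (0 : σ →₀ ℕ) = 0 := by
  unfold wz; simp

lemma vmin_one : vmin i a (1 : MvPolynomial σ K) = 0 := by
  classical
  have h0 : (1 : MvPolynomial σ K) = monomial 0 1 := by
    rw [monomial_zero', C_1]
  have h1 : ((1 : MvPolynomial σ K)).support = {0} := by
    rw [h0, support_monomial, if_neg one_ne_zero]
  unfold vmin
  rw [h1]
  simp [wz_zero]

lemma vmin_pow {f : MvPolynomial σ K} (hf : f ≠ 0) (n : ℕ) :
    vmin i a (f ^ n) = n * vmin i a f := by
  induction n with
  | zero => rw [pow_zero, vmin_one, zero_mul]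
  | succ n ih =>
      rw [pow_succ, vmin_mul (pow_ne_zero n hf) hf, ih]
      ring

end Vmin

section Closure

variable {K : Type*} [Field K] {σ : Type*} {k : ℕ}
variable {i : Fin (k + 1) → σ} {a : Fin (k + 1) → ℕ}

lemma gens_le_Jdeg (hi : Function.Injective i) :
    Ideal.span (Set.range fun p => (X (i p) : MvPolynomial σ K) ^ a p) ≤ Jdeg i a (wA a) := by
  classical
  rw [Ideal.span_le]
  rintro _ ⟨p, rfl⟩
  intro b hb
  simp only at hb
  rw [X_pow_eq_monomial, support_monomial, if_neg one_ne_zero, Finset.mem_singleton] at hb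
  subst hb
  rw [wz_single hi, Nat.mul_div_cancel' (a_dvd_wA p)]

lemma intClosure_le_Jdeg (hi : Function.Injective i) :
    intClosure (Ideal.span (Set.range fun p => (X (i p) : MvPolynomial σ K) ^ a p)) ≤
      Jdeg i a (wA a) := by
  classical
  set I := Ideal.span (Set.range fun p => (X (i p) : MvPolynomial σ K) ^ a p) with hIdef
  have hIJ : I ≤ Jdeg i a (wA a) := gens_le_Jdeg hi
  rw [intClosure, Ideal.span_le]
  rintro f ⟨n, hn, c, hc, heq⟩
  intro b hb
  by_contra hlt
  push_neg at hlt
  have hf0 : f ≠ 0 := fun h => by simp [h] at hb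
  have hv : vmin i a f < wA a := lt_of_le_of_lt (vmin_le hb) hlt
  have heq2 : f ^ n = -∑ t ∈ Finset.Icc 1 n, c t * f ^ (n - t) :=
    eq_neg_of_add_eq_zero_left heq
  obtain ⟨b', hb', hwz'⟩ := exists_wz_eq_vmin (i := i) (a := a) (pow_ne_zero n hf0)
  rw [vmin_pow hf0 n] at hwz'
  rw [heq2, MvPolynomial.support_neg] at hb'
  obtain ⟨t, htIcc, hbt⟩ := Finset.mem_biUnion.1 (MvPolynomial.support_sum hb')
  obtain ⟨ht1, htn⟩ := Finset.mem_Icc.1 htIcc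
  have hct : c t ∈ Jdeg i a (t * wA a) := Jdeg_pow_le hIJ t (hc t htIcc)
  have hft : f ^ (n - t) ∈ Jdeg i a ((n - t) * vmin i a f) :=
    Jdeg_pow_le (le_refl (Jdeg i a (vmin i a f))) (n - t)
      (Ideal.pow_mem_pow (mem_Jdeg_vmin (i := i) (a := a) (f := f)) (n - t))
  have hge := Jdeg_mul_le (Ideal.mul_mem_mul hct hft) b' hbt
  rw [hwz'] at hge
  -- hge : t * wA a + (n - t) * vmin i a f ≤ n * vmin i a f
  set v := vmin i a f with hvdef
  have e1 : (n - t) * v + t * v = n * v := by rw [← add_mul, Nat.sub_add_cancel htn]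
  have h4 : t * wA a ≤ t * v := by omega
  have h5 : wA a ≤ v := Nat.le_of_mul_le_mul_left h4 (by omega)
  omega

end Closure

section EasyDir

variable {K : Type*} [Field K] {σ : Type*} {k : ℕ}
variable {i : Fin (k + 1) → σ} {a : Fin (k + 1) → ℕ}

lemma wA_le_of_monomial_mem (hi : Function.Injective i) {b : σ →₀ ℕ}
    (h : (monomial b 1 : MvPolynomial σ K) ∈
      intClosure (Ideal.span (Set.range fun p => (X (i p) : MvPolynomial σ K) ^ a p))) :
    wA a ≤ wz i a b := by
  classical
  refine intClosure_le_Jdeg hi h b ?_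
  rw [support_monomial, if_neg one_ne_zero]
  exact Finset.mem_singleton_self b

lemma prod_mem_pow_sum {R : Type*} [CommRing R] (I : Ideal R) {ι : Type*} (s : Finset ι)
    (q : ι → ℕ) (g : ι → R) (h : ∀ p ∈ s, g p ∈ I ^ q p) :
    (∏ p ∈ s, g p) ∈ I ^ (∑ p ∈ s, q p) := by
  classical
  induction s using Finset.induction_on with
  | empty => simp [Ideal.one_eq_top]
  | insert _ _ hnotmem ih =>
      rename_i x s
      rw [Finset.prod_insert hnotmem, Finset.sum_insert hnotmem, pow_add]
      exact Ideal.mul_mem_mul (h x (Finset.mem_insert_self x s))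
        (ih fun p hp => h p (Finset.mem_insert_of_mem hp))

lemma monomial_finset_prod {ι : Type*} (s : Finset ι) (u : ι → (σ →₀ ℕ)) :
    (∏ p ∈ s, (monomial (u p) (1 : K))) = monomial (∑ p ∈ s, u p) 1 := by
  classical
  induction s using Finset.induction_on with
  | empty => simp [monomial_zero', C_1]
  | insert _ _ hnotmem ih =>
      rename_i x s
      rw [Finset.prod_insert hnotmem, Finset.sum_insert hnotmem, ih, monomial_mul, one_mul]

lemma monomial_mem_of_wA_le (hi : Function.Injective i) (ha2 : 2 ≤ a 0) (hmono : Monotone a)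
    {b : σ →₀ ℕ} (hwz : wA a ≤ wz i a b) :
    (monomial b 1 : MvPolynomial σ K) ∈
      intClosure (Ideal.span (Set.range fun p => (X (i p) : MvPolynomial σ K) ^ a p)) := by
  classical
  set I := Ideal.span (Set.range fun p => (X (i p) : MvPolynomial σ K) ^ a p) with hIdef
  set A := wA a with hA
  have hApos : 0 < A := wA_pos ha2 hmono
  -- the key power membership
  set s : σ →₀ ℕ := ∑ p, Finsupp.single (i p) (A * b (i p)) with hs
  have hs_apply_eq : ∀ p, s (i p) = A * b (i p) := by
    intro p
    rw [hs, Finsupp.finset_sum_apply, Finset.sum_eq_single p]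
    · rw [Finsupp.single_apply, if_pos rfl]
    · intro q _ hq
      rw [Finsupp.single_apply, if_neg fun h => hq (hi h)]
    · intro h; exact absurd (Finset.mem_univ p) h
  have hs_apply_zero : ∀ j, (∀ p, i p ≠ j) → s j = 0 := by
    intro j hj
    rw [hs, Finsupp.finset_sum_apply]
    refine Finset.sum_eq_zero fun p _ => ?_
    rw [Finsupp.single_apply, if_neg (hj p)]
  have hsle : s ≤ A • b := by
    intro j
    by_cases hj : ∃ p, i p = j
    · obtain ⟨p, rfl⟩ := hj
      rw [hs_apply_eq p, Finsupp.smul_apply, smul_eq_mul]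
    · push_neg at hj
      rw [hs_apply_zero j hj]
      exact Nat.zero_le _
  have hsplit : s + (A • b - s) = A • b := by
    ext j
    have := hsle j
    simp only [Finsupp.add_apply, Finsupp.tsub_apply]
    omega
  have hpow : (monomial b 1 : MvPolynomial σ K) ^ A ∈ I ^ A := by
    have h1 : (monomial b 1 : MvPolynomial σ K) ^ A = monomial (A • b) 1 := by
      rw [monomial_pow, one_pow]
    have h2 : (monomial (A • b) 1 : MvPolynomial σ K) =
        (∏ p, (monomial (Finsupp.single (i p) (A * b (i p))) (1 : K))) *
          monomial (A • b - s) 1 := by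
      rw [monomial_finset_prod, monomial_mul, one_mul, ← hs, hsplit]
    have h3 : (∏ p, (monomial (Finsupp.single (i p) (A * b (i p))) (1 : K))) ∈
        I ^ (∑ p, b (i p) * (A / a p)) := by
      refine prod_mem_pow_sum I Finset.univ (fun p => b (i p) * (A / a p)) _ fun p _ => ?_
      have hd : a p * (b (i p) * (A / a p)) = A * b (i p) := by
        rw [← mul_assoc, mul_comm (a p) (b (i p)), mul_assoc,
          Nat.mul_div_cancel' (a_dvd_wA p), mul_comm]
      have : (monomial (Finsupp.single (i p) (A * b (i p))) (1 : K)) =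
          ((X (i p) : MvPolynomial σ K) ^ a p) ^ (b (i p) * (A / a p)) := by
        rw [← pow_mul, X_pow_eq_monomial, hd]
      rw [this]
      exact Ideal.pow_mem_pow (Ideal.subset_span (Set.mem_range.2 ⟨p, rfl⟩)) _
    have h4 : (I : Ideal (MvPolynomial σ K)) ^ (∑ p, b (i p) * (A / a p)) ≤ I ^ A :=
      Ideal.pow_le_pow_right hwz
    rw [h1, h2]
    exact Ideal.mul_mem_right _ _ (h4 h3)
  -- build the integral equation
  apply Ideal.subset_span
  refine ⟨A, hApos, fun t => if t = A then -((monomial b 1 : MvPolynomial σ K) ^ A) else 0,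
    ?_, ?_⟩
  · intro t _
    by_cases ht : t = A
    · subst ht
      simp only [if_pos rfl]
      exact neg_mem hpow
    · simp only [if_neg ht]
      exact Ideal.zero_mem _
  · have hsum : ∑ t ∈ Finset.Icc 1 A,
        (if t = A then -((monomial b 1 : MvPolynomial σ K) ^ A) else 0) *
          (monomial b 1 : MvPolynomial σ K) ^ (A - t) =
        -((monomial b 1 : MvPolynomial σ K) ^ A) := by
      rw [Finset.sum_eq_single_of_mem A (Finset.mem_Icc.2 ⟨hApos, le_refl A⟩)]
      · rw [if_pos rfl, Nat.sub_self, pow_zero, mul_one]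
      · intro t _ ht
        rw [if_neg ht, zero_mul]
    simp only [hsum, add_neg_cancel]

end EasyDir

section Pprime

variable {K : Type*} [Field K] {σ : Type*} {k : ℕ}
variable {i : Fin (k + 1) → σ}

lemma span_X_isPrime :
    (Ideal.span (Set.range fun p => (X (i p) : MvPolynomial σ K))).IsPrime := by
  classical
  set P := Ideal.span (Set.range fun p => (X (i p) : MvPolynomial σ K)) with hP
  set g : σ → MvPolynomial σ K := fun j => if j ∈ Set.range i then 0 else X j with hg
  set φ : MvPolynomial σ K →ₐ[K] MvPolynomial σ K := aeval g with hφ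
  have key : ∀ f : MvPolynomial σ K, f - φ f ∈ P := by
    intro f
    induction f using MvPolynomial.induction_on with
    | C r =>
        rw [hφ, aeval_C, algebraMap_eq, sub_self]
        exact Ideal.zero_mem P
    | add p q hp hq =>
        rw [_root_.map_add]
        have : p + q - (φ p + φ q) = (p - φ p) + (q - φ q) := by ring
        rw [this]
        exact Ideal.add_mem P hp hq
    | mul_X p j hp =>
        rw [_root_.map_mul]
        have : p * X j - φ p * φ (X j) =
            X j * (p - φ p) + φ p * (X j - φ (X j)) := by ring
        rw [this]
        refine Ideal.add_mem P (Ideal.mul_mem_left P _ hp) ?_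
        by_cases hj : j ∈ Set.range i
        · have : φ (X j) = 0 := by rw [hφ, aeval_X, hg]; exact if_pos hj
          rw [this, sub_zero]
          obtain ⟨p0, rfl⟩ := hj
          exact Ideal.mul_mem_left P _ (Ideal.subset_span (Set.mem_range.2 ⟨p0, rfl⟩))
        · have : φ (X j) = X j := by rw [hφ, aeval_X, hg]; exact if_neg hj
          rw [this, sub_self, mul_zero]
          exact Ideal.zero_mem P
  have hPker : P = RingHom.ker (φ : MvPolynomial σ K →+* MvPolynomial σ K) := by
    refine le_antisymm ?_ ?_
    · rw [hP, Ideal.span_le]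
      rintro _ ⟨p, rfl⟩
      have : φ (X (i p)) = 0 := by
        rw [hφ, aeval_X, hg]; exact if_pos (Set.mem_range.2 ⟨p, rfl⟩)
      exact this
    · intro f hf
      have hf0 : φ f = 0 := hf
      have := key f
      rwa [hf0, sub_zero] at this
  rw [hPker]
  exact RingHom.ker_isPrime _

lemma one_not_mem_span_X :
    (1 : MvPolynomial σ K) ∉ Ideal.span (Set.range fun p => (X (i p) : MvPolynomial σ K)) :=
  fun h => span_X_isPrime.ne_top (Ideal.eq_top_iff_one _ |>.2 h)

end Pprime

/-- If `I = ⟨x_{i_1}^{a_1},…,x_{i_r}^{a_r}⟩` with `2 ≤ a_1 ≤ ⋯ ≤ a_r` (here `r = k+1`) and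
`f = x^m` is a monomial with `(closure(I) : f) = ⟨x_{i_1},…,x_{i_r}⟩` and
`deg f = v(closure(I))`, then `f = g / x_{i_r}` for some minimal monomial generator `g`
of `closure(I)`. -/
theorem eq_minGen_div_last_var
    {K : Type*} [Field K] {σ : Type*} (k : ℕ) (i : Fin (k + 1) → σ)
    (hi : Function.Injective i)
    (a : Fin (k + 1) → ℕ) (ha2 : 2 ≤ a 0) (hmono : Monotone a)
    (I : Ideal (MvPolynomial σ K))
    (hI : I = Ideal.span (Set.range fun p => (X (i p) : MvPolynomial σ K) ^ a p))
    (P : Ideal (MvPolynomial σ K))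
    (hP : P = Ideal.span (Set.range fun p => (X (i p) : MvPolynomial σ K)))
    (m : σ →₀ ℕ)
    (hcolon : Submodule.colon (intClosure I)
        (Ideal.span {(monomial m 1 : MvPolynomial σ K)}) = P)
    (hdeg : (m.sum fun _ e => e) = vnumber (intClosure I)) :
    ∃ c : σ →₀ ℕ,
      ((monomial c 1 : MvPolynomial σ K) ∈ intClosure I ∧
        ∀ c' : σ →₀ ℕ, c' ≤ c → c' ≠ c →
          (monomial c' 1 : MvPolynomial σ K) ∉ intClosure I) ∧
      c = m + Finsupp.single (i (Fin.last k)) 1 := by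
  classical
  subst hI
  subst hP
  set r := Fin.last k with hr
  set A := wA a with hA
  set c : σ →₀ ℕ := m + Finsupp.single (i r) 1 with hc
  -- membership of generators times x^m
  have hmonX : ∀ (p : Fin (k + 1)) (u : σ →₀ ℕ),
      (X (i p) : MvPolynomial σ K) * monomial u 1 =
      monomial (u + Finsupp.single (i p) 1) 1 := by
    intro p u
    rw [show (X (i p) : MvPolynomial σ K) = monomial (Finsupp.single (i p) 1) 1 by
      rw [← X_pow_eq_monomial, pow_one], monomial_mul, one_mul, add_comm]
  have hmemXp : ∀ p : Fin (k + 1),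
      (monomial (m + Finsupp.single (i p) 1) 1 : MvPolynomial σ K) ∈
        intClosure (Ideal.span (Set.range fun p => (X (i p) : MvPolynomial σ K) ^ a p)) := by
    intro p
    have hXp : (X (i p) : MvPolynomial σ K) ∈
        Ideal.span (Set.range fun p => (X (i p) : MvPolynomial σ K)) :=
      Ideal.subset_span (Set.mem_range.2 ⟨p, rfl⟩)
    rw [← hcolon] at hXp
    have := Ideal.mem_colon_span_singleton.1 hXp
    rwa [hmonX p m] at this
  -- x^m itself is not in the closure
  have hm_not : (monomial m 1 : MvPolynomial σ K) ∉
      intClosure (Ideal.span (Set.range fun p => (X (i p) : MvPolynomial σ K) ^ a p)) := by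
    intro h
    have h1 : (1 : MvPolynomial σ K) ∈ Submodule.colon
        (intClosure (Ideal.span (Set.range fun p => (X (i p) : MvPolynomial σ K) ^ a p)))
        (Ideal.span {(monomial m 1 : MvPolynomial σ K)}) :=
      Ideal.mem_colon_span_singleton.2 (by rwa [one_mul])
    rw [hcolon] at h1
    exact one_not_mem_span_X h1
  have hwzm_lt : wz i a m < A := by
    by_contra hge
    push_neg at hge
    exact hm_not (monomial_mem_of_wA_le hi ha2 hmono hge)
  have hwz_mp : ∀ p : Fin (k + 1), A ≤ wz i a (m + Finsupp.single (i p) 1) :=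
    fun p => wA_le_of_monomial_mem hi (hmemXp p)
  -- the support of m is contained in the range of i
  have hm_outside : ∀ j : σ, (∀ p : Fin (k + 1), i p ≠ j) → m j = 0 := by
    intro j hj
    by_contra hmj
    have hmj1 : 1 ≤ m j := Nat.one_le_iff_ne_zero.2 hmj
    set m' : σ →₀ ℕ := m - Finsupp.single j 1 with hm'
    have hm'add : m' + Finsupp.single j 1 = m := by
      ext j'
      simp only [Finsupp.add_apply, Finsupp.tsub_apply, hm', Finsupp.single_apply]
      by_cases h : j = j'
      · subst h; simp; omega
      · simp [h]
    have hm'x : (monomial m 1 : MvPolynomial σ K) =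
        monomial m' 1 * X j := by
      rw [show (X j : MvPolynomial σ K) = monomial (Finsupp.single j 1) 1 by
        rw [← X_pow_eq_monomial, pow_one], monomial_mul, one_mul, hm'add]
    have hm'agree : ∀ p : Fin (k + 1), m' (i p) = m (i p) := by
      intro p
      rw [hm', Finsupp.tsub_apply, Finsupp.single_apply, if_neg (fun h => hj p h.symm), Nat.sub_zero]
    have hco : Submodule.colon
        (intClosure (Ideal.span (Set.range fun p => (X (i p) : MvPolynomial σ K) ^ a p)))
        (Ideal.span {(monomial m' 1 : MvPolynomial σ K)}) =
        Ideal.span (Set.range fun p => (X (i p) : MvPolynomial σ K)) := by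
      refine le_antisymm ?_ ?_
      · intro g hg
        have h1 : g * monomial m' 1 ∈ _ := Ideal.mem_colon_span_singleton.1 hg
        have h2 : g * monomial m 1 ∈
            intClosure (Ideal.span (Set.range fun p => (X (i p) : MvPolynomial σ K) ^ a p)) := by
          rw [hm'x, ← mul_assoc]
          exact Ideal.mul_mem_right _ _ h1
        rw [← hcolon]
        exact Ideal.mem_colon_span_singleton.2 h2
      · rw [Ideal.span_le]
        rintro _ ⟨p, rfl⟩
        refine Ideal.mem_colon_span_singleton.2 ?_
        rw [hmonX p m']
        refine monomial_mem_of_wA_le hi ha2 hmono ?_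
        have : wz i a (m' + Finsupp.single (i p) 1) = wz i a (m + Finsupp.single (i p) 1) :=
          wz_congr fun q => by
            simp only [Finsupp.add_apply]
            rw [hm'agree q]
        rw [this]
        exact hwz_mp p
    -- P is an associated prime via x^{m'}
    have hassoc : Submodule.colon
        (intClosure (Ideal.span (Set.range fun p => (X (i p) : MvPolynomial σ K) ^ a p)))
        (Ideal.span {(monomial m' 1 : MvPolynomial σ K)}) ∈
        associatedPrimes (MvPolynomial σ K)
          (MvPolynomial σ K ⧸
            intClosure (Ideal.span (Set.range fun p => (X (i p) : MvPolynomial σ K) ^ a p))) := by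
      rw [hco]
      refine ⟨span_X_isPrime, Ideal.Quotient.mk _ (monomial m' 1), ?_⟩
      suffices hsuf : Submodule.colon
          (intClosure (Ideal.span (Set.range fun p => (X (i p) : MvPolynomial σ K) ^ a p)))
          (Ideal.span {(monomial m' 1 : MvPolynomial σ K)}) =
          (⊥ : Submodule (MvPolynomial σ K) (MvPolynomial σ K ⧸
            intClosure (Ideal.span (Set.range fun p => (X (i p) : MvPolynomial σ K) ^ a p)))).colon
            {Ideal.Quotient.mk _ (monomial m' 1)} by
        rw [← hsuf, hco, span_X_isPrime.radical]
      ext g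
      rw [Submodule.mem_colon_singleton, Submodule.mem_bot, Ideal.mem_colon_span_singleton]
      have hsm : g • Ideal.Quotient.mk
          (intClosure (Ideal.span (Set.range fun p => (X (i p) : MvPolynomial σ K) ^ a p)))
          (monomial m' 1) =
          Ideal.Quotient.mk _ (g * monomial m' 1) := by
        rw [← Ideal.Quotient.mk_eq_mk, ← Ideal.Quotient.mk_eq_mk, ← Submodule.Quotient.mk_smul,
          smul_eq_mul]
      rw [hsm, Ideal.Quotient.eq_zero_iff_mem]
    -- degree bookkeeping
    have hsum : (m.sum fun _ e => e) = (m'.sum fun _ e => e) + 1 := by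
      rw [← hm'add, Finsupp.sum_add_index (fun _ _ => rfl) (fun _ _ _ _ => rfl),
        Finsupp.sum_single_index rfl]
    have hhom : (monomial m' 1 : MvPolynomial σ K).IsHomogeneous
        ((m.sum fun _ e => e) - 1) :=
      isHomogeneous_monomial 1 (by rw [hsum]; rfl)
    have hle : vnumber (intClosure
        (Ideal.span (Set.range fun p => (X (i p) : MvPolynomial σ K) ^ a p))) ≤
        (m.sum fun _ e => e) - 1 := by
      unfold vnumber
      exact Nat.sInf_le ⟨monomial m' 1, hhom, hassoc⟩
    have hpos : 1 ≤ (m.sum fun _ e => e) := by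
      have hjs : j ∈ m.support := Finsupp.mem_support_iff.2 hmj
      have h2 := Finset.single_le_sum (f := fun j' => m j') (fun _ _ => Nat.zero_le _) hjs
      exact le_trans hmj1 h2
    omega
  -- assemble
  refine ⟨c, ⟨?_, ?_⟩, rfl⟩
  · exact hmemXp r
  · intro c' hle hne hmem
    have hj : ∃ j, c' j < c j := by
      by_contra hcon
      push_neg at hcon
      exact hne (le_antisymm hle fun j => hcon j)
    obtain ⟨j, hjlt⟩ := hj
    have hcj : 1 ≤ c j := by omega
    by_cases hjr : ∃ p, i p = j
    · obtain ⟨p, rfl⟩ := hjr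
      set d : σ →₀ ℕ := c - Finsupp.single (i p) 1 with hd
      have hd_add : d + Finsupp.single (i p) 1 = c := by
        ext j'
        simp only [Finsupp.add_apply, Finsupp.tsub_apply, hd, Finsupp.single_apply]
        by_cases h : i p = j'
        · subst h
          rw [if_pos rfl]
          omega
        · rw [if_neg h]
          omega
      have hc'd : c' ≤ d := by
        intro j'
        rw [hd, Finsupp.tsub_apply, Finsupp.single_apply]
        have hl := Finsupp.le_def.1 hle j'
        by_cases h : i p = j'
        · subst h
          rw [if_pos rfl]
          omega
        · rw [if_neg h]
          omega
      have hdm : (monomial d 1 : MvPolynomial σ K) ∈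
          intClosure (Ideal.span (Set.range fun p => (X (i p) : MvPolynomial σ K) ^ a p)) := by
        have : (monomial d 1 : MvPolynomial σ K) =
            monomial c' 1 * monomial (d - c') 1 := by
          rw [monomial_mul, one_mul, add_tsub_cancel_of_le hc'd]
        rw [this]
        exact Ideal.mul_mem_right _ _ hmem
      have hwzd : A ≤ wz i a d := wA_le_of_monomial_mem hi hdm
      by_cases hp : p = r
      · have hdm' : d = m := by
          ext j'
          have h2 : d j' + Finsupp.single (i p) 1 j' = c j' := by
            rw [← hd_add]; simp [Finsupp.add_apply]
          rw [hc, hp] at h2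
          simp only [Finsupp.add_apply] at h2
          omega
        rw [hdm'] at hdm
        exact hm_not hdm
      · -- p ≠ last
        have hwz1 : wz i a d + wz i a (Finsupp.single (i p) 1) = wz i a c := by
          rw [← wz_add, hd_add]
        have hwz2 : wz i a c = wz i a m + wz i a (Finsupp.single (i r) 1) := by
          rw [← wz_add]
        have hwzsp : wz i a (Finsupp.single (i p) 1) = A / a p := by
          rw [wz_single hi, one_mul]
        have hwzsr : wz i a (Finsupp.single (i r) 1) = A / a r := by
          rw [wz_single hi, one_mul]
        have hdiv : A / a r ≤ A / a p :=
          Nat.div_le_div_left (hmono (Fin.le_last p)) (a_pos ha2 hmono p)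
        omega
    · push_neg at hjr
      have hm0 := hm_outside j hjr
      have : c j = 0 := by
        rw [hc]
        simp only [Finsupp.add_apply, Finsupp.single_apply, hm0]
        rw [if_neg (hjr r)]
        rfl
      omega
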